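/- Let ε ≥ 0 and let Q be a Markov kernel from a measurable space X to a measurable space Y that is ε-differentially private, i.e., Q(x)(S) ≤ e^{ε}·Q(x′)(S) for all x, x′ ∈ X and all measurable S ⊆ Y. Then for any pair of probability measures P₁ and P₂ on X, the induced marginal measures M₁ and M₂ on Y, defined by M_j(S) = ∫_X Q(x)(S) dP_j(x) for j = 1, 2, satisfy KL(M₁ ‖ M₂) + KL(M₂ ‖ M₁) ≤ min{4, e^{2ε}}·(e^{ε} − 1)²·TV(P₁, P₂)², where KL denotes the Kullback–Leibler divergence and TV the total variation distance. -/

import Mathlib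

open MeasureTheory Set
open scoped ENNReal


open MeasureTheory

open Classical in
/-- Kullback–Leibler divergence, `+∞` unless `μ ≪ ν` and the log-likelihood ratio
is `μ`-integrable. -/
noncomputable def klDiv {Y : Type*} [MeasurableSpace Y] (μ ν : Measure Y) : EReal :=
  if μ ≪ ν ∧ Integrable (llr μ ν) μ then ((∫ y, llr μ ν y ∂μ : ℝ) : EReal) else ⊤

/-- Total variation distance between two measures. -/
noncomputable def tvDist {X : Type*} [MeasurableSpace X] (P₁ P₂ : Measure X) : ℝ :=
  ⨆ S : {S : Set X // MeasurableSet S}, |(P₁ S.1).toReal - (P₂ S.1).toReal|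

private lemma layercake_comp {X : Type*} [MeasurableSpace X] (P P' : Measure X) (t d : ℝ≥0∞)
    (hd : d ≠ ∞) (htv : ∀ A : Set X, MeasurableSet A → P A ≤ P' A + t)
    (h : X → ℝ≥0∞) (hm : Measurable h) (hb : ∀ x, h x ≤ d) :
    ∫⁻ x, h x ∂P ≤ (∫⁻ x, h x ∂P') + d * t := by
  set hr : X → ℝ := fun x => (h x).toReal with hhr
  have hne : ∀ x, h x ≠ ∞ := fun x => ((hb x).trans_lt hd.lt_top).ne
  have hrm : Measurable hr := hm.ennreal_toReal
  have key : ∀ R : Measure X, ∫⁻ x, h x ∂ R = ∫⁻ s in Ioi (0:ℝ), R {x | s < hr x} := by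
    intro R
    rw [← lintegral_eq_lintegral_meas_lt R (Filter.Eventually.of_forall fun x => ENNReal.toReal_nonneg)
      hrm.aemeasurable]
    exact lintegral_congr fun x => (ENNReal.ofReal_toReal (hne x)).symm
  set D := d.toReal with hD
  have hD0 : (0:ℝ) ≤ D := ENNReal.toReal_nonneg
  have hrle : ∀ x, hr x ≤ D := fun x => ENNReal.toReal_mono hd (hb x)
  have hsplit : ∫⁻ s in Ioi (0:ℝ), P {x | s < hr x} =
      (∫⁻ s in Ioc (0:ℝ) D, P {x | s < hr x}) + ∫⁻ s in Ioi D, P {x | s < hr x} := by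
    rw [← Ioc_union_Ioi_eq_Ioi hD0, lintegral_union measurableSet_Ioi (Ioc_disjoint_Ioi le_rfl)]
  have hzero : ∫⁻ s in Ioi D, P {x | s < hr x} = 0 := by
    rw [setLIntegral_congr_fun measurableSet_Ioi
      (fun s hs => ?_), lintegral_zero]
    have : {x | s < hr x} = ∅ := eq_empty_of_forall_notMem fun x hx =>
      absurd hx (not_lt.mpr ((hrle x).trans hs.le))
    simp [this]
  calc ∫⁻ x, h x ∂P = ∫⁻ s in Ioc (0:ℝ) D, P {x | s < hr x} := by
        rw [key P, hsplit, hzero]; ring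
    _ ≤ ∫⁻ s in Ioc (0:ℝ) D, (P' {x | s < hr x} + t) := by
        refine lintegral_mono fun s => htv _ (measurableSet_lt measurable_const hrm)
    _ = (∫⁻ s in Ioc (0:ℝ) D, P' {x | s < hr x}) + t * volume (Ioc (0:ℝ) D) := by
        rw [lintegral_add_right _ measurable_const, lintegral_const,
          Measure.restrict_apply_univ]
    _ ≤ (∫⁻ s in Ioi (0:ℝ), P' {x | s < hr x}) + d * t := by
        refine add_le_add (lintegral_mono_set Ioc_subset_Ioi_self) (le_of_eq ?_)
        rw [Real.volume_Ioc, sub_zero, hD, ENNReal.ofReal_toReal hd, mul_comm]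
    _ = (∫⁻ x, h x ∂P') + d * t := by rw [key P']

private lemma bind_le_smul_bind {X Y : Type*} [MeasurableSpace X] [MeasurableSpace Y]
    (ε : ℝ) (Q : ProbabilityTheory.Kernel X Y) [ProbabilityTheory.IsMarkovKernel Q]
    (hDP : ∀ x x' : X, ∀ S : Set Y, MeasurableSet S →
      Q x S ≤ ENNReal.ofReal (Real.exp ε) * Q x' S)
    (P P' : Measure X) [IsProbabilityMeasure P] [IsProbabilityMeasure P']
    (t : ℝ≥0∞) (htv : ∀ A : Set X, MeasurableSet A → P A ≤ P' A + t) :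
    P.bind Q ≤ (1 + (ENNReal.ofReal (Real.exp ε) - 1) * t) • (P'.bind Q) := by
  have hX : Nonempty X := by
    by_contra hX
    rw [not_nonempty_iff] at hX
    have h1 := measure_univ (μ := P)
    rw [Set.univ_eq_empty_iff.mpr hX, measure_empty] at h1
    exact zero_ne_one h1
  set e := ENNReal.ofReal (Real.exp ε) with he_def
  have he : e ≠ ∞ := ENNReal.ofReal_ne_top
  refine Measure.le_iff.mpr fun S hS => ?_
  set g : X → ℝ≥0∞ := fun x => Q x S with hg_def
  have hg : Measurable g := Q.measurable_coe hS
  set b := ⨅ x, g x with hb_def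
  have hb_le : ∀ x, b ≤ g x := fun x => iInf_le _ x
  have hb1 : b ≤ 1 := (hb_le (Classical.arbitrary X)).trans prob_le_one
  have hbne : b ≠ ∞ := (hb1.trans_lt ENNReal.one_lt_top).ne
  have hgeb : ∀ x, g x ≤ e * b := by
    intro x
    rw [hb_def, ENNReal.mul_iInf (fun h => absurd h he)]
    exact le_iInf fun x' => hDP x x' S hS
  set h : X → ℝ≥0∞ := fun x => g x - b with hh_def
  have hgh : ∀ x, g x = b + h x := fun x => (add_tsub_cancel_of_le (hb_le x)).symm
  have hhm : Measurable h := hg.sub measurable_const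
  set d := (e - 1) * b with hd_def
  have hdne : d ≠ ∞ := ENNReal.mul_ne_top (ENNReal.sub_ne_top he) hbne
  have hhd : ∀ x, h x ≤ d := by
    intro x
    have h1 : g x - b ≤ e * b - b := tsub_le_tsub_right (hgeb x) b
    have h2 : (e - 1) * b = e * b - 1 * b := ENNReal.sub_mul (fun _ _ => hbne)
    rw [hd_def, h2, one_mul]
    exact h1
  have hbind : ∀ R : Measure X, (R.bind Q) S = ∫⁻ x, g x ∂ R := fun R =>
    Measure.bind_apply hS Q.measurable.aemeasurable
  have hlin : ∀ (R : Measure X) [IsProbabilityMeasure R], ∫⁻ x, g x ∂ R = b + ∫⁻ x, h x ∂ R := by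
    intro R hR
    calc ∫⁻ x, g x ∂ R = ∫⁻ x, (b + h x) ∂ R := lintegral_congr fun x => hgh x
      _ = b * R univ + ∫⁻ x, h x ∂ R := by rw [lintegral_add_left measurable_const, lintegral_const]
      _ = b + ∫⁻ x, h x ∂ R := by rw [measure_univ, mul_one]
  have hkey := layercake_comp P P' t d hdne htv h hhm hhd
  have hbP' : b ≤ (P'.bind Q) S := by
    rw [hbind P']
    calc b = b * P' univ := by rw [measure_univ, mul_one]
      _ = ∫⁻ _, b ∂P' := (lintegral_const b).symm
      _ ≤ ∫⁻ x, g x ∂P' := lintegral_mono hb_le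
  calc (P.bind Q) S = b + ∫⁻ x, h x ∂P := by rw [hbind P, hlin P]
    _ ≤ b + ((∫⁻ x, h x ∂P') + d * t) := by gcongr
    _ = (b + ∫⁻ x, h x ∂P') + d * t := by ring
    _ = (P'.bind Q) S + (e - 1) * b * t := by rw [hbind P', hlin P']
    _ ≤ (P'.bind Q) S + (e - 1) * ((P'.bind Q) S) * t := by gcongr
    _ = (1 + (e - 1) * t) * (P'.bind Q) S := by ring
    _ = ((1 + (e - 1) * t) • (P'.bind Q)) S := by rw [Measure.smul_apply, smul_eq_mul]

theorem stmt_10 {X Y : Type*} [MeasurableSpace X] [MeasurableSpace Y]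
    (ε : ℝ) (hε : 0 ≤ ε)
    (Q : ProbabilityTheory.Kernel X Y) [ProbabilityTheory.IsMarkovKernel Q]
    (hDP : ∀ x x' : X, ∀ S : Set Y, MeasurableSet S →
      Q x S ≤ ENNReal.ofReal (Real.exp ε) * Q x' S)
    (P₁ P₂ : Measure X) [IsProbabilityMeasure P₁] [IsProbabilityMeasure P₂] :
    klDiv (P₁.bind Q) (P₂.bind Q) + klDiv (P₂.bind Q) (P₁.bind Q) ≤
      ((min 4 (Real.exp (2 * ε)) * (Real.exp ε - 1) ^ 2 * tvDist P₁ P₂ ^ 2 : ℝ) : EReal) := by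
  have hprob : ∀ (P : Measure X) [IsProbabilityMeasure P], IsProbabilityMeasure (P.bind Q) := by
    intro P hP
    constructor
    rw [Measure.bind_apply MeasurableSet.univ Q.measurable.aemeasurable]
    simp
  haveI hprob1 : IsProbabilityMeasure (P₁.bind Q) := hprob P₁
  haveI hprob2 : IsProbabilityMeasure (P₂.bind Q) := hprob P₂
  set tv := tvDist P₁ P₂ with htv_def
  -- basic facts about tv
  have hbdd : BddAbove (Set.range fun S : {S : Set X // MeasurableSet S} =>
      |(P₁ S.1).toReal - (P₂ S.1).toReal|) := by
    refine ⟨1, ?_⟩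
    rintro r ⟨S, rfl⟩
    have h1 : (P₁ S.1).toReal ≤ 1 := by
      rw [← ENNReal.toReal_one]
      exact ENNReal.toReal_mono ENNReal.one_ne_top prob_le_one
    have h2 : (P₂ S.1).toReal ≤ 1 := by
      rw [← ENNReal.toReal_one]
      exact ENNReal.toReal_mono ENNReal.one_ne_top prob_le_one
    have h3 : (0:ℝ) ≤ (P₁ S.1).toReal := ENNReal.toReal_nonneg
    have h4 : (0:ℝ) ≤ (P₂ S.1).toReal := ENNReal.toReal_nonneg
    exact abs_le.mpr ⟨by linarith, by linarith⟩
  have htv0 : 0 ≤ tv := le_trans (abs_nonneg _) (le_ciSup hbdd ⟨∅, MeasurableSet.empty⟩)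
  have habs : ∀ A : Set X, MeasurableSet A → |(P₁ A).toReal - (P₂ A).toReal| ≤ tv :=
    fun A hA => le_ciSup hbdd ⟨A, hA⟩
  have hle : ∀ (P P' : Measure X) [IsFiniteMeasure P] [IsFiniteMeasure P'], (∀ A : Set X, MeasurableSet A →
      (P A).toReal - (P' A).toReal ≤ tv) → ∀ A : Set X, MeasurableSet A →
      P A ≤ P' A + ENNReal.ofReal tv := by
    intro P P' _ _ hPP' A hA
    calc P A = ENNReal.ofReal (P A).toReal := (ENNReal.ofReal_toReal (measure_ne_top _ _)).symm
      _ ≤ ENNReal.ofReal ((P' A).toReal + tv) := ENNReal.ofReal_le_ofReal (by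
          have := hPP' A hA; linarith)
      _ = P' A + ENNReal.ofReal tv := by
          rw [ENNReal.ofReal_add ENNReal.toReal_nonneg htv0,
            ENNReal.ofReal_toReal (measure_ne_top _ _)]
  have hle12 : ∀ A : Set X, MeasurableSet A → P₁ A ≤ P₂ A + ENNReal.ofReal tv :=
    hle P₁ P₂ fun A hA => (le_abs_self _).trans (habs A hA)
  have hle21 : ∀ A : Set X, MeasurableSet A → P₂ A ≤ P₁ A + ENNReal.ofReal tv :=
    hle P₂ P₁ fun A hA => by
      have := habs A hA
      have h2 := neg_abs_le ((P₁ A).toReal - (P₂ A).toReal)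
      linarith
  set cr := (Real.exp ε - 1) * tv with hcr_def
  have hexp1 : 1 ≤ Real.exp ε := Real.one_le_exp hε
  have hcr0 : 0 ≤ cr := mul_nonneg (by linarith) htv0
  have h1pc : (0:ℝ) < 1 + cr := by linarith
  have hC : (1 : ℝ≥0∞) + (ENNReal.ofReal (Real.exp ε) - 1) * ENNReal.ofReal tv
      = ENNReal.ofReal (1 + cr) := by
    rw [hcr_def, ← ENNReal.ofReal_one, ← ENNReal.ofReal_sub _ zero_le_one,
      ← ENNReal.ofReal_mul (by linarith : (0:ℝ) ≤ Real.exp ε - 1),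
      ← ENNReal.ofReal_add zero_le_one (by nlinarith)]
  have hM12 : P₁.bind Q ≤ ENNReal.ofReal (1 + cr) • (P₂.bind Q) := by
    rw [← hC]; exact bind_le_smul_bind ε Q hDP P₁ P₂ _ hle12
  have hM21 : P₂.bind Q ≤ ENNReal.ofReal (1 + cr) • (P₁.bind Q) := by
    rw [← hC]
    exact bind_le_smul_bind ε Q (fun x x' S hS => hDP x x' S hS) P₂ P₁ _ hle21
  have hac12 : P₁.bind Q ≪ P₂.bind Q := Measure.absolutelyContinuous_of_le_smul hM12
  have hac21 : P₂.bind Q ≪ P₁.bind Q := Measure.absolutelyContinuous_of_le_smul hM21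
  set M₁ := P₁.bind Q
  set M₂ := P₂.bind Q
  -- bounds on the Radon-Nikodym derivative
  have hf_up : ∀ᵐ x ∂M₂, M₁.rnDeriv M₂ x ≤ ENNReal.ofReal (1 + cr) := by
    refine ae_le_of_forall_setLIntegral_le_of_sigmaFinite
      (Measure.measurable_rnDeriv _ _) fun s hs _ => ?_
    rw [Measure.setLIntegral_rnDeriv hac12, setLIntegral_const]
    exact le_trans (Measure.le_iff'.mp hM12 s) (by rw [Measure.smul_apply, smul_eq_mul])
  have hf_low : (fun _ : Y => (1:ℝ≥0∞)) ≤ᵐ[M₂]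
      fun x => ENNReal.ofReal (1 + cr) * M₁.rnDeriv M₂ x := by
    refine ae_le_of_forall_setLIntegral_le_of_sigmaFinite measurable_const fun s hs _ => ?_
    rw [setLIntegral_const, one_mul,
      lintegral_const_mul _ (Measure.measurable_rnDeriv _ _),
      Measure.setLIntegral_rnDeriv hac12]
    exact le_trans (Measure.le_iff'.mp hM21 s) (by rw [Measure.smul_apply, smul_eq_mul])
  have hf_fin : ∀ᵐ x ∂M₂, M₁.rnDeriv M₂ x < ∞ := Measure.rnDeriv_lt_top _ _
  have hFb : ∀ᵐ x ∂M₂, (M₁.rnDeriv M₂ x).toReal ≤ 1 + cr ∧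
      1 ≤ (1 + cr) * (M₁.rnDeriv M₂ x).toReal ∧ 0 < (M₁.rnDeriv M₂ x).toReal := by
    filter_upwards [hf_up, hf_low, hf_fin] with x hup hlow hfin
    have hne : M₁.rnDeriv M₂ x ≠ ∞ := hfin.ne
    have hb1 : (M₁.rnDeriv M₂ x).toReal ≤ 1 + cr := by
      calc (M₁.rnDeriv M₂ x).toReal ≤ (ENNReal.ofReal (1 + cr)).toReal :=
            ENNReal.toReal_mono ENNReal.ofReal_ne_top hup
        _ = 1 + cr := ENNReal.toReal_ofReal h1pc.le
    have hb2 : (1:ℝ) ≤ (1 + cr) * (M₁.rnDeriv M₂ x).toReal := by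
      have h := ENNReal.toReal_mono (ENNReal.mul_ne_top ENNReal.ofReal_ne_top hne) hlow
      rwa [ENNReal.toReal_one, ENNReal.toReal_mul, ENNReal.toReal_ofReal h1pc.le] at h
    exact ⟨hb1, hb2, by nlinarith⟩
  -- bound on llr
  have hllr_eq : ∀ x, llr M₁ M₂ x = Real.log (M₁.rnDeriv M₂ x).toReal := fun x => rfl
  have hlog : ∀ᵐ x ∂M₂, |llr M₁ M₂ x| ≤ cr := by
    filter_upwards [hFb] with x hx
    obtain ⟨h1, h2, h3⟩ := hx
    rw [hllr_eq, abs_le]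
    have ha : Real.log (M₁.rnDeriv M₂ x).toReal ≤ cr :=
      (Real.log_le_sub_one_of_pos h3).trans (by linarith)
    have hinv : ((M₁.rnDeriv M₂ x).toReal)⁻¹ ≤ 1 + cr := by
      rw [inv_eq_one_div, div_le_iff₀ h3]
      linarith
    have hb : -Real.log (M₁.rnDeriv M₂ x).toReal ≤ cr := by
      rw [← Real.log_inv]
      calc Real.log ((M₁.rnDeriv M₂ x).toReal)⁻¹
          ≤ ((M₁.rnDeriv M₂ x).toReal)⁻¹ - 1 := Real.log_le_sub_one_of_pos (by positivity)
        _ ≤ cr := by linarith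
    exact ⟨by linarith, ha⟩
  -- integrability
  have hmeas : AEStronglyMeasurable (llr M₁ M₂) M₂ := (measurable_llr _ _).aestronglyMeasurable
  have hint2 : Integrable (llr M₁ M₂) M₂ :=
    Integrable.mono' (integrable_const cr) hmeas
      (hlog.mono fun x hx => by rwa [Real.norm_eq_abs])
  have hint1 : Integrable (llr M₁ M₂) M₁ :=
    Integrable.mono' (integrable_const cr) (measurable_llr _ _).aestronglyMeasurable
      ((hlog.filter_mono hac12.ae_le).mono fun x hx => by rwa [Real.norm_eq_abs])
  have hlogr : llr M₂ M₁ =ᵐ[M₂] fun x => - llr M₁ M₂ x := by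
    filter_upwards [neg_llr hac21] with x hx
    rw [← hx]
    simp
  have hint21 : Integrable (llr M₂ M₁) M₂ := hint2.neg.congr hlogr.symm
  -- kl values
  have hkl1 : klDiv M₁ M₂ = ((∫ y, llr M₁ M₂ y ∂M₁ : ℝ) : EReal) := by
    rw [klDiv, if_pos ⟨hac12, hint1⟩]
  have hkl2 : klDiv M₂ M₁ = ((∫ y, llr M₂ M₁ y ∂M₂ : ℝ) : EReal) := by
    rw [klDiv, if_pos ⟨hac21, hint21⟩]
  set A := ∫ y, llr M₁ M₂ y ∂M₁ with hA_def
  set B := ∫ y, llr M₂ M₁ y ∂M₂ with hB_def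
  have hB : B = - ∫ y, llr M₁ M₂ y ∂M₂ := by
    rw [hB_def, integral_congr_ae hlogr, integral_neg]
  have hA : A = ∫ y, (M₁.rnDeriv M₂ y).toReal • llr M₁ M₂ y ∂M₂ :=
    (MeasureTheory.integral_rnDeriv_smul hac12).symm
  have hintA : Integrable (fun y => (M₁.rnDeriv M₂ y).toReal • llr M₁ M₂ y) M₂ :=
    (MeasureTheory.integrable_rnDeriv_smul_iff hac12).mpr hint1
  have hint_prod : Integrable (fun y => ((M₁.rnDeriv M₂ y).toReal - 1) * llr M₁ M₂ y) M₂ :=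
    (hintA.sub hint2).congr (Filter.Eventually.of_forall fun y => by
      simp only [Pi.sub_apply, smul_eq_mul]; ring)
  have hsum : A + B = ∫ y, ((M₁.rnDeriv M₂ y).toReal - 1) * llr M₁ M₂ y ∂M₂ := by
    rw [hA, hB, ← sub_eq_add_neg, ← integral_sub hintA hint2]
    exact integral_congr_ae (Filter.Eventually.of_forall fun y => by
      simp only [Pi.sub_apply, smul_eq_mul]; ring)
  have hptwise : ∀ᵐ y ∂M₂, ((M₁.rnDeriv M₂ y).toReal - 1) * llr M₁ M₂ y ≤ cr ^ 2 := by
    filter_upwards [hFb] with y hy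
    obtain ⟨h1, h2, h3⟩ := hy
    rw [hllr_eq]
    set F := (M₁.rnDeriv M₂ y).toReal with hF_def
    have hlog_ub : Real.log F ≤ F - 1 := Real.log_le_sub_one_of_pos h3
    have hlog_lb : -Real.log F ≤ F⁻¹ - 1 := by
      rw [← Real.log_inv]
      exact Real.log_le_sub_one_of_pos (by positivity)
    have hFinv : F * F⁻¹ = 1 := mul_inv_cancel₀ h3.ne'
    rcases le_or_gt 1 F with hF | hF
    · have key : (F - 1) * Real.log F ≤ (F - 1) * (F - 1) :=
        mul_le_mul_of_nonneg_left hlog_ub (by linarith)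
      nlinarith
    · have key : (1 - F) * (-Real.log F) ≤ (1 - F) * (F⁻¹ - 1) :=
        mul_le_mul_of_nonneg_left hlog_lb (by linarith)
      have hinv : F⁻¹ ≤ 1 + cr := by
        rw [inv_eq_one_div, div_le_iff₀ h3]; linarith
      nlinarith
  have hABle : A + B ≤ cr ^ 2 := by
    rw [hsum]
    calc ∫ y, ((M₁.rnDeriv M₂ y).toReal - 1) * llr M₁ M₂ y ∂M₂
        ≤ ∫ _, cr ^ 2 ∂M₂ := integral_mono_ae hint_prod (integrable_const _) hptwise
      _ = cr ^ 2 := by simp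
  rw [hkl1, hkl2, ← EReal.coe_add]
  refine EReal.coe_le_coe_iff.mpr ?_
  have hmin : 1 ≤ min 4 (Real.exp (2 * ε)) :=
    le_min (by norm_num) (Real.one_le_exp (by linarith))
  calc A + B ≤ cr ^ 2 := hABle
    _ = (Real.exp ε - 1) ^ 2 * tv ^ 2 := by rw [hcr_def]; ring
    _ ≤ min 4 (Real.exp (2 * ε)) * ((Real.exp ε - 1) ^ 2 * tv ^ 2) :=
        le_mul_of_one_le_left (by positivity) hmin
    _ = min 4 (Real.exp (2 * ε)) * (Real.exp ε - 1) ^ 2 * tv ^ 2 := by ring
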